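/- Let (W,S) be a dihedral Coxeter system (|S| = 2), s ∈ S a simple reflection, x ∈ W, and set A = {y ∈ W : y ≤ x} (Bruhat order). Then in the Hecke algebra (T_s + 1)·∑_{y∈A} T_y = ∑_{y ∈ A ∪ sA} T_y + v^{-2}·∑_{y ∈ A ∩ sA} T_y. -/

import Mathlib

def CoxeterSystem.bruhatLE {B : Type*} {W : Type*} [Group W] {M : CoxeterMatrix B}
    (cs : CoxeterSystem M W) (u x : W) : Prop :=
  ∃ ω : List B, cs.IsReduced ω ∧ cs.wordProd ω = x ∧
    ∃ ω' : List B, ω'.Sublist ω ∧ cs.wordProd ω' = u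


namespace HeckeAux

open List

variable {B : Type*} {W : Type*} [Group W] {M : CoxeterMatrix B} (cs : CoxeterSystem M W)

lemma chain'_ne_of_isReduced : ∀ {ω : List B}, cs.IsReduced ω → ω.Chain' (· ≠ ·) := by
  intro ω
  induction ω with
  | nil => intro _; exact List.isChain_nil
  | cons c ω' ih =>
    intro h
    have htail : cs.IsReduced ω' := by
      have := h.drop 1
      simpa using this
    rcases ω' with _ | ⟨d, ω''⟩
    · exact List.isChain_singleton _
    · refine List.isChain_cons_cons.mpr ⟨?_, ih htail⟩
      intro hcd
      subst hcd
      have heq : cs.wordProd (c :: c :: ω'') = cs.wordProd ω'' := by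
        rw [cs.wordProd_cons, cs.wordProd_cons, cs.simple_mul_simple_cancel_left]
      have h1 := cs.length_wordProd_le ω''
      have h2 : cs.length (cs.wordProd (c :: c :: ω'')) = (c :: c :: ω'').length := h
      rw [heq] at h2
      simp at h2
      omega

lemma sublist_of_head (h2 : ∀ p q r : B, p ≠ q → r = p ∨ r = q) :
    ∀ (ω ζ : List B), ζ.Chain' (· ≠ ·) → ω.Chain' (· ≠ ·) → ζ.length ≤ ω.length →
      (∀ d c, ζ.head? = some d → ω.head? = some c → d = c) → ζ.Sublist ω := by
  intro ω
  induction ω with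
  | nil =>
    intro ζ _ _ hlen _
    simp only [List.length_nil, Nat.le_zero, List.length_eq_zero_iff] at hlen
    simp [hlen]
  | cons c ω₁ ih =>
    intro ζ hζ hω hlen hhead
    rcases ζ with _ | ⟨d, ζ₁⟩
    · exact List.nil_sublist _
    · have hdc : d = c := hhead d c rfl rfl
      subst hdc
      have hsub : ζ₁.Sublist ω₁ := by
        apply ih ζ₁ hζ.tail hω.tail (by simpa using hlen)
        intro d' c' hd' hc'
        have h1 : d ≠ d' := (List.isChain_cons.mp hζ).1 d' hd'
        have h3 : d ≠ c' := (List.isChain_cons.mp hω).1 c' hc'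
        rcases h2 d c' d' h3 with h | h
        · exact absurd h.symm h1
        · exact h
      exact hsub.cons₂ d

lemma sublist_of_lt (h2 : ∀ p q r : B, p ≠ q → r = p ∨ r = q)
    (ζ ω : List B) (hζ : ζ.Chain' (· ≠ ·)) (hω : ω.Chain' (· ≠ ·))
    (hlen : ζ.length < ω.length) : ζ.Sublist ω := by
  rcases ζ with _ | ⟨d, ζ₁⟩
  · exact List.nil_sublist _
  rcases ω with _ | ⟨c, ω₁⟩
  · simp at hlen
  by_cases hdc : d = c
  · exact sublist_of_head h2 (c :: ω₁) (d :: ζ₁) hζ hω (le_of_lt hlen)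
      (by intro d' c' hd' hc'; simp at hd' hc'; rw [← hd', ← hc', hdc])
  · rcases ω₁ with _ | ⟨c', ω₂⟩
    · simp only [List.length_cons, List.length_nil] at hlen
      omega
    have hcc' : c ≠ c' := (List.isChain_cons_cons.mp hω).1
    have hdc' : d = c' := by
      rcases h2 c c' d hcc' with h | h
      · exact absurd h hdc
      · exact h
    have : (d :: ζ₁).Sublist (c' :: ω₂) := by
      apply sublist_of_head h2 (c' :: ω₂) (d :: ζ₁) hζ hω.tail
      · simpa using Nat.lt_succ_iff.mp (by simpa using hlen)
      · intro a b ha hb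
        simp at ha hb
        rw [← ha, ← hb, hdc']
    exact this.trans (List.sublist_cons_self c (c' :: ω₂))

lemma bruhat_closure (h2 : ∀ p q r : B, p ≠ q → r = p ∨ r = q)
    (i : B) {y x : W} (hle : cs.bruhatLE y x)
    (hlt : cs.length (cs.simple i * y) < cs.length y) :
    cs.bruhatLE (cs.simple i * y) x := by
  obtain ⟨ω, hred, hx, ω', hsub, hy⟩ := hle
  obtain ⟨ζ, hζlen, hζ⟩ := cs.exists_reduced_word (cs.simple i * y)
  have hζred : cs.IsReduced ζ := hζlen
  have hlen : ζ.length < ω.length := by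
    have h1 : cs.length y ≤ ω'.length := by rw [← hy]; exact cs.length_wordProd_le ω'
    have h3 := hsub.length_le
    have h4 : cs.length (cs.simple i * y) = ζ.length := by rw [hζ]; exact hζlen
    omega
  exact ⟨ω, hred, hx, ζ, sublist_of_lt h2 ζ ω (chain'_ne_of_isReduced cs hζred)
    (chain'_ne_of_isReduced cs hred) hlen, hζ.symm⟩

end HeckeAux

open HeckeAux in
theorem hecke_dihedral_Ts_add_one_mul_sum
    {B : Type*} {W : Type*} [Group W] [DecidableEq W] {M : CoxeterMatrix B}
    (cs : CoxeterSystem M W)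
    (hdihedral : Nat.card B = 2)
    {H : Type*} [Ring H] [Algebra (LaurentPolynomial ℤ) H]
    (Tb : W → H)
    (hTone : Tb 1 = 1)
    (hTmul : ∀ x y : W, cs.length (x * y) = cs.length x + cs.length y →
      Tb x * Tb y = Tb (x * y))
    (hTs : ∀ i : B, Tb (cs.simple i) * Tb (cs.simple i) =
      (LaurentPolynomial.T (-2) : LaurentPolynomial ℤ) • Tb 1
        + ((LaurentPolynomial.T (-2) : LaurentPolynomial ℤ) - 1) • Tb (cs.simple i))
    (i : B) (x : W)
    (A : Finset W) (hA : ∀ y : W, y ∈ A ↔ cs.bruhatLE y x) :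
    (Tb (cs.simple i) + 1) * ∑ y ∈ A, Tb y =
      (∑ y ∈ A ∪ A.image (fun y => cs.simple i * y), Tb y)
        + (LaurentPolynomial.T (-2) : LaurentPolynomial ℤ) •
            ∑ y ∈ A ∩ A.image (fun y => cs.simple i * y), Tb y := by
  classical
  set v2 : LaurentPolynomial ℤ := LaurentPolynomial.T (-2) with hv2
  set si := cs.simple i with hsi
  set f : W → W := fun y => si * y with hf
  -- two-element letter set
  have h2 : ∀ p q r : B, p ≠ q → r = p ∨ r = q := by
    obtain ⟨a, b, hab, huniv⟩ := Nat.card_eq_two_iff.mp hdihedral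
    intro p q r hpq
    have hmem : ∀ z : B, z = a ∨ z = b := by
      intro z
      have : z ∈ ({a, b} : Set B) := huniv ▸ Set.mem_univ z
      simpa using this
    rcases hmem p with rfl | rfl <;> rcases hmem q with rfl | rfl <;>
      rcases hmem r with rfl | rfl <;> tauto
  have hffs : ∀ z : W, si * (si * z) = z := fun z => cs.simple_mul_simple_cancel_left i
  have hff : ∀ z : W, f (f z) = z := fun z => hffs z
  have hfinj : Function.Injective f := fun u v h => by
    have := congrArg f h; rwa [hff, hff] at this
  -- length dichotomy
  have hdich : ∀ y : W, cs.length (si * y) = cs.length y + 1 ∨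
      cs.length (si * y) + 1 = cs.length y := fun y => cs.length_simple_mul y i
  -- closure of A under left descents
  have hclosed : ∀ y ∈ A, cs.length (si * y) < cs.length y → si * y ∈ A := by
    intro y hy hlt
    exact (hA _).mpr (bruhat_closure cs h2 i ((hA y).mp hy) hlt)
  set P := A.filter (fun y => cs.length y < cs.length (si * y)) with hPdef
  set N := A.filter (fun y => ¬ cs.length y < cs.length (si * y)) with hNdef
  set Pin := P.filter (fun y => si * y ∈ A) with hPindef
  set Pout := P.filter (fun y => si * y ∉ A) with hPoutdef
  have hmemN : ∀ y, y ∈ N ↔ y ∈ A ∧ cs.length (si * y) < cs.length y := by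
    intro y
    rw [hNdef, Finset.mem_filter]
    constructor
    · rintro ⟨h1, h3⟩; exact ⟨h1, by rcases hdich y with h | h <;> omega⟩
    · rintro ⟨h1, h3⟩; exact ⟨h1, by omega⟩
  have hmemPin : ∀ y, y ∈ Pin ↔ (y ∈ A ∧ cs.length y < cs.length (si * y)) ∧ si * y ∈ A := by
    intro y; rw [hPindef, Finset.mem_filter, hPdef, Finset.mem_filter]
  have hmemPout : ∀ y, y ∈ Pout ↔ (y ∈ A ∧ cs.length y < cs.length (si * y)) ∧ si * y ∉ A := by
    intro y; rw [hPoutdef, Finset.mem_filter, hPdef, Finset.mem_filter]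
  -- image facts
  have hNimg : N.image f = Pin := by
    ext z
    simp only [Finset.mem_image, hf]
    constructor
    · rintro ⟨y, hy, rfl⟩
      rw [hmemN] at hy
      obtain ⟨hyA, hylt⟩ := hy
      have hzA : si * y ∈ A := hclosed y hyA hylt
      rw [hmemPin]
      exact ⟨⟨hzA, by rw [hffs y]; exact hylt⟩, by rw [hffs y]; exact hyA⟩
    · intro hz
      rw [hmemPin] at hz
      obtain ⟨⟨hzA, hzlt⟩, hszA⟩ := hz
      refine ⟨si * z, ?_, hffs z⟩
      rw [hmemN]
      exact ⟨hszA, by rw [hffs z]; exact hzlt⟩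
  have hPinimg : Pin.image f = N := by
    rw [← hNimg, Finset.image_image]
    have hid : (f ∘ f) = id := funext hff
    rw [hid, Finset.image_id]
  -- union and intersection decompositions
  have hUnion : A ∪ A.image f = A ∪ Pout.image f := by
    ext z
    simp only [Finset.mem_union, Finset.mem_image, hf]
    constructor
    · rintro (hz | ⟨y, hy, rfl⟩)
      · exact Or.inl hz
      · by_cases hyl : cs.length y < cs.length (si * y)
        · by_cases hin : si * y ∈ A
          · exact Or.inl hin
          · refine Or.inr ⟨y, ?_, rfl⟩
            rw [hmemPout]
            exact ⟨⟨hy, hyl⟩, hin⟩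
        · exact Or.inl (hclosed y hy (by rcases hdich y with h | h <;> omega))
    · rintro (hz | ⟨y, hy, rfl⟩)
      · exact Or.inl hz
      · rw [hmemPout] at hy
        exact Or.inr ⟨y, hy.1.1, rfl⟩
  have hInter : A ∩ A.image f = N ∪ Pin := by
    ext z
    simp only [Finset.mem_inter, Finset.mem_union, Finset.mem_image, hf]
    constructor
    · rintro ⟨hzA, y, hyA, rfl⟩
      by_cases hl : cs.length (si * (si * y)) < cs.length (si * y)
      · exact Or.inl ((hmemN _).mpr ⟨hzA, hl⟩)
      · rw [hffs y] at hl
        refine Or.inr ((hmemPin _).mpr ⟨⟨hzA, ?_⟩, by rw [hffs y]; exact hyA⟩)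
        rw [hffs y]
        rcases hdich y with h | h <;> omega
    · rintro (hz | hz)
      · rw [hmemN] at hz
        exact ⟨hz.1, si * z, hclosed z hz.1 hz.2, hffs z⟩
      · rw [hmemPin] at hz
        exact ⟨hz.1.1, si * z, hz.2, hffs z⟩
  have hdisj1 : Disjoint A (Pout.image f) := by
    rw [Finset.disjoint_right]
    intro z hz
    rw [Finset.mem_image] at hz
    obtain ⟨y, hy, rfl⟩ := hz
    rw [hmemPout] at hy
    exact hy.2
  have hdisj2 : Disjoint N Pin := by
    rw [Finset.disjoint_left]
    intro z hz hz'
    rw [hmemN] at hz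
    rw [hmemPin] at hz'
    omega
  -- Hecke multiplication rules
  have hTsP : ∀ y ∈ P, Tb si * Tb y = Tb (f y) := by
    intro y hy
    rw [hPdef, Finset.mem_filter] at hy
    have hl : cs.length (si * y) = cs.length si + cs.length y := by
      have h1 : cs.length si = 1 := cs.length_simple i
      rcases hdich y with h | h <;> omega
    exact hTmul si y hl
  have hTsN : ∀ y ∈ N, Tb si * Tb y = v2 • Tb (f y) + (v2 - 1) • Tb y := by
    intro y hy
    rw [hmemN] at hy
    obtain ⟨-, hylt⟩ := hy
    have hlen : cs.length (si * (si * y)) = cs.length si + cs.length (si * y) := by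
      have h1 : cs.length si = 1 := cs.length_simple i
      rw [hffs y]
      rcases hdich y with h | h <;> omega
    have h1 : Tb si * Tb (si * y) = Tb y := by rw [hTmul si (si * y) hlen, hffs y]
    calc Tb si * Tb y = Tb si * (Tb si * Tb (si * y)) := by rw [h1]
      _ = (Tb si * Tb si) * Tb (si * y) := (mul_assoc _ _ _).symm
      _ = (v2 • Tb 1 + (v2 - 1) • Tb si) * Tb (si * y) := by rw [hTs i]
      _ = v2 • Tb (si * y) + (v2 - 1) • Tb y := by
          rw [add_mul, smul_mul_assoc, smul_mul_assoc, hTone, one_mul, h1]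
  -- sum computations
  have hsplitA : ∑ y ∈ A, Tb y = ∑ y ∈ P, Tb y + ∑ y ∈ N, Tb y :=
    (Finset.sum_filter_add_sum_filter_not A _ Tb).symm
  have hsplitP : ∀ g : W → H, ∑ y ∈ P, g y = ∑ y ∈ Pin, g y + ∑ y ∈ Pout, g y := by
    intro g
    exact (Finset.sum_filter_add_sum_filter_not P _ g).symm
  have hNf : ∑ y ∈ N, Tb (f y) = ∑ y ∈ Pin, Tb y := by
    rw [← hNimg, Finset.sum_image (fun a _ b _ h => hfinj h)]
  have hPinf : ∑ y ∈ Pin, Tb (f y) = ∑ y ∈ N, Tb y := by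
    rw [← hPinimg, Finset.sum_image (fun a _ b _ h => hfinj h)]
  have hPoutf : ∑ y ∈ Pout.image f, Tb y = ∑ y ∈ Pout, Tb (f y) :=
    Finset.sum_image (fun a _ b _ h => hfinj h)
  have hLHS1 : Tb si * ∑ y ∈ A, Tb y
      = (∑ y ∈ Pin, Tb (f y) + ∑ y ∈ Pout, Tb (f y))
        + (v2 • ∑ y ∈ N, Tb (f y) + (v2 - 1) • ∑ y ∈ N, Tb y) := by
    rw [Finset.mul_sum]
    rw [← Finset.sum_filter_add_sum_filter_not A (fun y => cs.length y < cs.length (si * y))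
        (fun y => Tb si * Tb y)]
    congr 1
    · rw [Finset.sum_congr rfl hTsP, hsplitP (fun y => Tb (f y))]
    · rw [Finset.sum_congr rfl hTsN, Finset.sum_add_distrib, ← Finset.smul_sum, ← Finset.smul_sum]
  -- now assemble
  rw [hUnion, hInter, Finset.sum_union hdisj1, Finset.sum_union hdisj2, hPoutf]
  rw [add_mul, one_mul, hLHS1, hPinf, hNf, hsplitA, hsplitP Tb]
  rw [sub_smul, one_smul, smul_add]
  abel
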